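/- Let h: [n] → [n] be a Hessenberg function. For 1 < j ≤ n and any i with h(j-1) ≤ i ≤ n, the polynomial g_{i,j-1} lies in the ideal ⟨g_{h(1),1}, ..., g_{h(j-1),j-1}⟩ of ℚ[x_1,...,x_n]. -/

import Mathlib

open MvPolynomial

/-- The variable `x_m` (1-indexed) in `ℚ[x_1,…,x_n]`. -/
noncomputable def xv (n : ℕ) (m : ℕ) : MvPolynomial (Fin n) ℚ :=
  if h : m - 1 < n then X ⟨m - 1, h⟩ else 0

/-- `f_{i,j} = ∑_{k=1}^{j} (∏_{ℓ=j+1}^{i} (x_k - x_ℓ)) x_k`. -/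
noncomputable def fpoly (n i j : ℕ) : MvPolynomial (Fin n) ℚ :=
  ∑ k ∈ Finset.Icc 1 j, (∏ l ∈ Finset.Icc (j+1) i, (xv n k - xv n l)) * xv n k

/-- `g_{i,j} = ∑_{k=1}^{j} ∏_{ℓ=j+1}^{i} (x_k - x_ℓ)`. -/
noncomputable def gpoly (n i j : ℕ) : MvPolynomial (Fin n) ℚ :=
  ∑ k ∈ Finset.Icc 1 j, ∏ l ∈ Finset.Icc (j+1) i, (xv n k - xv n l)

/-- `h` is a Hessenberg function on `{1,…,n}`. -/
def IsHessenberg (n : ℕ) (h : ℕ → ℕ) : Prop :=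
  (∀ i, 1 ≤ i → i ≤ n → i ≤ h i ∧ h i ≤ n) ∧
  (∀ i, 1 ≤ i → i < n → h i ≤ h (i + 1))

/-- The key recursion: `g_{i+1,p+1} = g_{i,p} + (x_{p+1} - x_{i+1}) g_{i,p+1}`. -/
lemma grec (n i p : ℕ) (hij : p + 1 ≤ i) :
    gpoly n (i+1) (p+1) =
      gpoly n i p + (xv n (p+1) - xv n (i+1)) * gpoly n i (p+1) := by
  unfold gpoly
  set A : ℕ → MvPolynomial (Fin n) ℚ :=
    fun k => ∏ l ∈ Finset.Icc (p+2) i, (xv n k - xv n l) with hA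
  have h1 : ∀ k, ∏ l ∈ Finset.Icc (p+2) (i+1), (xv n k - xv n l)
      = A k * (xv n k - xv n (i+1)) := by
    intro k
    rw [Finset.prod_Icc_succ_top (by omega : p+2 ≤ i+1)]
  have h2 : ∀ k, ∏ l ∈ Finset.Icc (p+1) i, (xv n k - xv n l)
      = (xv n k - xv n (p+1)) * A k := by
    intro k
    rw [← Finset.Ioc_insert_left (by omega : p+1 ≤ i),
      Finset.prod_insert (by simp), ← Finset.Icc_add_one_left_eq_Ioc]
    rfl
  simp only [h1, h2]
  rw [Finset.sum_Icc_succ_top (by omega : 1 ≤ p+1),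
    Finset.sum_Icc_succ_top (by omega : 1 ≤ p+1), mul_add, Finset.mul_sum,
    ← add_assoc, ← Finset.sum_add_distrib]
  congr 1
  · exact Finset.sum_congr rfl fun k _ => by ring
  · ring

lemma gmain (n : ℕ) (h : ℕ → ℕ) (hh : IsHessenberg n h) :
    ∀ j, 1 ≤ j → j ≤ n → ∀ i, h j ≤ i → i ≤ n →
    gpoly n i j ∈ Ideal.span ((fun m => gpoly n (h m) m) '' Set.Icc 1 j) := by
  intro j
  induction j with
  | zero => omega
  | succ p ih =>
    intro _ hjn i hhi
    induction i, hhi using Nat.le_induction with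
    | base =>
      intro _
      exact Ideal.subset_span ⟨p+1, ⟨by omega, le_refl _⟩, rfl⟩
    | succ i hi ih2 =>
      intro hin
      have hp1 : p + 1 ≤ h (p+1) := (hh.1 (p+1) (by omega) hjn).1
      rw [grec n i p (by omega)]
      refine Ideal.add_mem _ ?_ (Ideal.mul_mem_left _ _ (ih2 (by omega)))
      rcases Nat.eq_zero_or_pos p with hp | hp
      · subst hp; simp [gpoly]
      · have hmono : h p ≤ h (p+1) := hh.2 p hp (by omega)
        exact Ideal.span_mono
          (Set.image_mono (Set.Icc_subset_Icc_right (by omega)))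
          (ih hp (by omega) i (by omega) (by omega))

theorem gpoly_mem_ideal (n : ℕ) (h : ℕ → ℕ) (hh : IsHessenberg n h)
    (j i : ℕ) (hj1 : 1 < j) (hjn : j ≤ n) (hi1 : h (j - 1) ≤ i) (hin : i ≤ n) :
    gpoly n i (j - 1) ∈
      Ideal.span ((fun m => gpoly n (h m) m) '' Set.Icc 1 (j - 1)) := by
  exact gmain n h hh (j - 1) (by omega) (by omega) i hi1 hin
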